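/- arXiv:2403.10810 — 2 statements merged into one kernel-verified Lean document; each statement's English description precedes it below -/
import Mathlib

section
/- For any nonnegative C^1 function F : ℝ^6 → [0,∞) with F(v,w) = F(w,v) and sufficient integrability, the marginal πF(v) := ∫_{ℝ^3} F(v,w) dw satisfies i(πF) ≤ (1/2) I(F), where i is the Fisher information on ℝ^3 and I is the Fisher information on ℝ^6. -/
open MeasureTheory

noncomputable section

/-- Partial derivative in the `i`-th coordinate direction. -/
def pd {n : ℕ} (f : (Fin n → ℝ) → ℝ) (x : Fin n → ℝ) (i : Fin n) : ℝ :=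
  fderiv ℝ f x (Pi.single i 1)

/-- Squared Euclidean norm of the gradient. -/
def gradSq {n : ℕ} (f : (Fin n → ℝ) → ℝ) (x : Fin n → ℝ) : ℝ :=
  ∑ i, (pd f x i) ^ 2

/-- Fisher information on ℝⁿ. -/
def fisher {n : ℕ} (f : (Fin n → ℝ) → ℝ) : ℝ :=
  ∫ x, gradSq f x / f x

lemma cs_div {α : Type*} [MeasurableSpace α] {μ : Measure α} {f h : α → ℝ}
    (hf0 : ∀ x, 0 ≤ f x) (hvan : ∀ x, f x = 0 → h x = 0)
    (hfi : Integrable f μ) (hq : Integrable (fun x => h x ^ 2 / f x) μ)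
    (hhi : Integrable h μ) :
    (∫ x, h x ∂μ) ^ 2 ≤ (∫ x, f x ∂μ) * ∫ x, h x ^ 2 / f x ∂μ := by
  have _ := hhi
  have hq0 : ∀ x, 0 ≤ h x ^ 2 / f x := fun x => div_nonneg (sq_nonneg _) (hf0 x)
  have key : ∀ x, |h x| = Real.sqrt (f x) * Real.sqrt (h x ^ 2 / f x) := by
    intro x
    by_cases hx : f x = 0
    · simp [hx, hvan x hx]
    · rw [← Real.sqrt_mul (hf0 x), mul_div_cancel₀ _ hx, Real.sqrt_sq_eq_abs]
  have hconj : Real.HolderConjugate 2 2 := Real.HolderConjugate.two_two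
  have m1 : MemLp (fun x => Real.sqrt (f x)) (ENNReal.ofReal 2) μ := by
    rw [show ENNReal.ofReal 2 = 2 by simp]
    refine (memLp_two_iff_integrable_sq
      (Real.continuous_sqrt.comp_aestronglyMeasurable hfi.aestronglyMeasurable)).2 ?_
    refine hfi.congr (Filter.Eventually.of_forall fun x => ?_)
    exact (Real.sq_sqrt (hf0 x)).symm
  have m2 : MemLp (fun x => Real.sqrt (h x ^ 2 / f x)) (ENNReal.ofReal 2) μ := by
    rw [show ENNReal.ofReal 2 = 2 by simp]
    refine (memLp_two_iff_integrable_sq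
      (Real.continuous_sqrt.comp_aestronglyMeasurable hq.aestronglyMeasurable)).2 ?_
    refine hq.congr (Filter.Eventually.of_forall fun x => ?_)
    exact (Real.sq_sqrt (hq0 x)).symm
  have hH := integral_mul_le_Lp_mul_Lq_of_nonneg hconj
    (Filter.Eventually.of_forall fun x => Real.sqrt_nonneg _)
    (Filter.Eventually.of_forall fun x => Real.sqrt_nonneg _) m1 m2
  have e1 : ∀ x, Real.sqrt (f x) ^ (2:ℝ) = f x := fun x => by
    rw [Real.rpow_two, Real.sq_sqrt (hf0 x)]
  have e2 : ∀ x, Real.sqrt (h x ^ 2 / f x) ^ (2:ℝ) = h x ^ 2 / f x := fun x => by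
    rw [Real.rpow_two, Real.sq_sqrt (hq0 x)]
  simp only [e1, e2] at hH
  have habs : |∫ x, h x ∂μ| ≤ ∫ x, |h x| ∂μ := by
    simpa [Real.norm_eq_abs] using norm_integral_le_integral_norm (μ := μ) h
  have habs2 : ∫ x, |h x| ∂μ = ∫ x, Real.sqrt (f x) * Real.sqrt (h x ^ 2 / f x) ∂μ :=
    integral_congr_ae (Filter.Eventually.of_forall fun x => key x)
  set X := ∫ x, f x ∂μ with hX
  set Y := ∫ x, h x ^ 2 / f x ∂μ with hY
  have hXnn : 0 ≤ X := integral_nonneg fun x => hf0 x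
  have hYnn : 0 ≤ Y := integral_nonneg fun x => hq0 x
  have hfin : |∫ x, h x ∂μ| ≤ X ^ (1/2 : ℝ) * Y ^ (1/2 : ℝ) := by
    calc |∫ x, h x ∂μ| ≤ ∫ x, |h x| ∂μ := habs
      _ = ∫ x, Real.sqrt (f x) * Real.sqrt (h x ^ 2 / f x) ∂μ := habs2
      _ ≤ X ^ (1/2 : ℝ) * Y ^ (1/2 : ℝ) := hH
  have hsq : (∫ x, h x ∂μ) ^ 2 ≤ (X ^ (1/2 : ℝ) * Y ^ (1/2 : ℝ)) ^ 2 := by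
    rw [← sq_abs]
    exact pow_le_pow_left₀ (abs_nonneg _) hfin 2
  refine hsq.trans_eq ?_
  rw [mul_pow, ← Real.rpow_two, ← Real.rpow_two, ← Real.rpow_mul hXnn, ← Real.rpow_mul hYnn]
  norm_num

local notation "E3" => (Fin 3 → ℝ)

/-- For a nonnegative symmetric `C¹` function `F` on ℝ⁶ with sufficient
integrability, the marginal `πF(v) = ∫ F(v,w) dw` satisfies
`i(πF) ≤ (1/2) I(F)`. -/
theorem fisher_marginal_le (F : (Fin 3 → ℝ) → (Fin 3 → ℝ) → ℝ)
    (hF0 : ∀ v w, 0 ≤ F v w)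
    (hF1 : ContDiff ℝ 1 (fun p : (Fin 3 → ℝ) × (Fin 3 → ℝ) => F p.1 p.2))
    (hsymm : ∀ v w, F v w = F w v)
    (hInt : Integrable (fun p : (Fin 3 → ℝ) × (Fin 3 → ℝ) => F p.1 p.2))
    (hIfin : Integrable (fun p : (Fin 3 → ℝ) × (Fin 3 → ℝ) =>
      (gradSq (fun v' => F v' p.2) p.1 + gradSq (fun w' => F p.1 w') p.2) / F p.1 p.2))
    (hdom : ∃ g : (Fin 3 → ℝ) → ℝ, Integrable g ∧
      ∀ v w i, |pd (fun v' => F v' w) v i| ≤ g w) :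
    fisher (fun v => ∫ w, F v w) ≤
      (1 / 2) * ∫ p : (Fin 3 → ℝ) × (Fin 3 → ℝ),
        (gradSq (fun v' => F v' p.2) p.1 + gradSq (fun w' => F p.1 w') p.2) / F p.1 p.2 := by
  classical
  obtain ⟨g, hg_int, hg_bd⟩ := hdom
  set Fc : E3 × E3 → ℝ := fun p => F p.1 p.2 with hFc
  have hg0 : ∀ w, 0 ≤ g w := fun w => (abs_nonneg _).trans (hg_bd 0 w 0)
  have hdiff : Differentiable ℝ Fc := hF1.differentiable one_ne_zero
  set L : E3 × E3 → (E3 →L[ℝ] ℝ) :=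
    fun p => (fderiv ℝ Fc p).comp (ContinuousLinearMap.inl ℝ E3 E3) with hL
  -- derivative of the first-slot partial map
  have hder : ∀ v w, HasFDerivAt (fun v' => F v' w) (L (v, w)) v := by
    intro v w
    exact (hdiff (v, w)).hasFDerivAt.comp v (hasFDerivAt_prodMk_left (𝕜 := ℝ) v w)
  have hfd : ∀ v w, fderiv ℝ (fun v' => F v' w) v = L (v, w) := fun v w => (hder v w).fderiv
  have hpd : ∀ v w i, pd (fun v' => F v' w) v i = L (v, w) (Pi.single i 1) := by
    intro v w i; rw [pd, hfd]
  have hLcont : Continuous L :=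
    (hF1.continuous_fderiv one_ne_zero).clm_comp continuous_const
  -- single-basis expansion and operator norm bound
  have hLbd : ∀ v w, ‖L (v, w)‖ ≤ 3 * g w := by
    intro v w
    refine ContinuousLinearMap.opNorm_le_bound _ (by nlinarith [hg0 w]) fun u => ?_
    have hu : u = ∑ i, u i • (Pi.single i 1 : E3) := by
      ext j
      rw [Finset.sum_apply]
      simp [Pi.single_apply]
    calc ‖L (v, w) u‖ = ‖∑ i, u i • L (v, w) (Pi.single i 1)‖ := by
          conv_lhs => rw [hu]
          rw [map_sum]
          simp only [_root_.map_smul]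
      _ ≤ ∑ i, ‖u i • L (v, w) (Pi.single i 1)‖ := norm_sum_le _ _
      _ ≤ ∑ i : Fin 3, ‖u‖ * g w := by
          refine Finset.sum_le_sum fun i _ => ?_
          rw [norm_smul]
          have h1 : ‖u i‖ ≤ ‖u‖ := norm_le_pi_norm u i
          have h2 : ‖L (v, w) (Pi.single i 1)‖ ≤ g w := by
            rw [Real.norm_eq_abs, ← hpd]; exact hg_bd v w i
          exact mul_le_mul h1 h2 (norm_nonneg _) (norm_nonneg _)
      _ = 3 * g w * ‖u‖ := by
          simp [Finset.sum_const]
          ring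
  -- gradSq of the first-slot partial map is jointly continuous
  have hgs_eq : ∀ v w, gradSq (fun v' => F v' w) v = ∑ i, (L (v, w) (Pi.single i 1)) ^ 2 := by
    intro v w; rw [gradSq]; exact Finset.sum_congr rfl fun i _ => by rw [hpd]
  have hFcont : Continuous Fc := hF1.continuous
  -- the two halves of the Fisher integrand
  set Φ : E3 × E3 → ℝ := fun p => gradSq (fun v' => F v' p.2) p.1 / F p.1 p.2 with hΦ
  set Ψ : E3 × E3 → ℝ := fun p => gradSq (fun w' => F p.1 w') p.2 / F p.1 p.2 with hΨ
  have hΦ0 : ∀ p, 0 ≤ Φ p := fun p =>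
    div_nonneg (Finset.sum_nonneg fun i _ => sq_nonneg _) (hF0 _ _)
  have hΨ0 : ∀ p, 0 ≤ Ψ p := fun p =>
    div_nonneg (Finset.sum_nonneg fun i _ => sq_nonneg _) (hF0 _ _)
  have hGeq : ∀ p : E3 × E3,
      (gradSq (fun v' => F v' p.2) p.1 + gradSq (fun w' => F p.1 w') p.2) / F p.1 p.2
        = Φ p + Ψ p := fun p => add_div _ _ _
  have hΦmeas : AEStronglyMeasurable Φ (volume : Measure (E3 × E3)) := by
    have hnum : Continuous fun p : E3 × E3 => ∑ i, (L p (Pi.single i 1)) ^ 2 :=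
      continuous_finset_sum _ fun i _ => (hLcont.clm_apply continuous_const).pow 2
    have : Φ = fun p : E3 × E3 => (∑ i, (L p (Pi.single i 1)) ^ 2) / Fc p := by
      funext p; rw [hΦ]; simp only [hgs_eq p.1 p.2]; rfl
    rw [this]
    exact (hnum.measurable.div hFcont.measurable).aestronglyMeasurable
  have hΨmeas : AEStronglyMeasurable Ψ (volume : Measure (E3 × E3)) := by
    have h1 : AEStronglyMeasurable (fun p : E3 × E3 =>
        (gradSq (fun v' => F v' p.2) p.1 + gradSq (fun w' => F p.1 w') p.2) / F p.1 p.2)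
        volume := hIfin.aestronglyMeasurable
    have : Ψ = fun p => ((gradSq (fun v' => F v' p.2) p.1
        + gradSq (fun w' => F p.1 w') p.2) / F p.1 p.2) - Φ p := by
      funext p; rw [hGeq p]; ring
    rw [this]
    exact h1.sub hΦmeas
  have hΦint : Integrable Φ (volume : Measure (E3 × E3)) := by
    refine hIfin.mono' hΦmeas (Filter.Eventually.of_forall fun p => ?_)
    rw [Real.norm_eq_abs, abs_of_nonneg (hΦ0 p), hGeq p]
    exact le_add_of_nonneg_right (hΨ0 p)
  have hΨint : Integrable Ψ (volume : Measure (E3 × E3)) := by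
    refine hIfin.mono' hΨmeas (Filter.Eventually.of_forall fun p => ?_)
    rw [Real.norm_eq_abs, abs_of_nonneg (hΨ0 p), hGeq p]
    exact le_add_of_nonneg_left (hΦ0 p)
  -- rewrite product volume
  have hvol : (volume : Measure (E3 × E3)) = (volume : Measure E3).prod volume :=
    rfl
  -- a.e. slice integrability
  have hsliceF : ∀ᵐ v : E3, Integrable (fun w => F v w) := by
    rw [hvol] at hInt
    exact hInt.prod_right_ae
  have hsliceΦ : ∀ᵐ v : E3, Integrable (fun w => Φ (v, w)) := by
    have := hΦint
    rw [hvol] at this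
    exact this.prod_right_ae
  -- pointwise (a.e. v) bound on the Fisher integrand of the marginal
  have hkey : ∀ᵐ v : E3, gradSq (fun v' => ∫ w, F v' w) v / (∫ w, F v w)
      ≤ ∫ w, Φ (v, w) := by
    filter_upwards [hsliceF, hsliceΦ] with v hFv hΦv
    -- derivative under the integral sign
    have hmeasw : ∀ x : E3, AEStronglyMeasurable (fun w => F x w) (volume : Measure E3) :=
      fun x => (hFcont.comp (Continuous.prodMk_right x)).aestronglyMeasurable
    have hL_meas : AEStronglyMeasurable (fun w => L (v, w)) (volume : Measure E3) :=
      (hLcont.comp (Continuous.prodMk_right v)).aestronglyMeasurable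
    have hDER : HasFDerivAt (fun x => ∫ w, F x w) (∫ w, L (v, w)) v := by
      refine hasFDerivAt_integral_of_dominated_of_fderiv_le (F' := fun x w => L (x, w))
        (bound := fun w => 3 * g w) Filter.univ_mem
        (Filter.Eventually.of_forall hmeasw) hFv hL_meas
        (Filter.Eventually.of_forall fun w => fun x _ => hLbd x w)
        (hg_int.const_mul 3)
        (Filter.Eventually.of_forall fun w => fun x _ => hder x w)
    have hL_int : Integrable (fun w => L (v, w)) (volume : Measure E3) := by
      refine Integrable.mono' (hg_int.const_mul 3) hL_meas
        (Filter.Eventually.of_forall fun w => hLbd v w)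
    have hpdint : ∀ i, pd (fun v' => ∫ w, F v' w) v i = ∫ w, L (v, w) (Pi.single i 1) := by
      intro i
      rw [pd, hDER.fderiv]
      exact ContinuousLinearMap.integral_apply hL_int _
    -- per-coordinate ingredients
    have hint_h : ∀ i : Fin 3, Integrable (fun w => L (v, w) (Pi.single i 1)) := by
      intro i
      refine Integrable.mono' hg_int
        (((hLcont.comp (Continuous.prodMk_right v)).clm_apply continuous_const).aestronglyMeasurable)
        (Filter.Eventually.of_forall fun w => ?_)
      rw [Real.norm_eq_abs, ← hpd]
      exact hg_bd v w i
    -- vanishing gradient at zeros of F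
    have hzero : ∀ w, F v w = 0 → L (v, w) = 0 := by
      intro w hw
      rw [← hfd v w]
      refine IsLocalMin.fderiv_eq_zero ?_
      exact Filter.Eventually.of_forall fun x => by
        show F v w ≤ F x w
        rw [hw]; exact hF0 x w
    -- integrability of each quotient integrand
    have hint_q : ∀ i : Fin 3,
        Integrable (fun w => (L (v, w) (Pi.single i 1)) ^ 2 / F v w) := by
      intro i
      have hmq : AEStronglyMeasurable
          (fun w => (L (v, w) (Pi.single i 1)) ^ 2 / F v w) (volume : Measure E3) := by
        refine Measurable.aestronglyMeasurable ?_
        exact ((((hLcont.comp (Continuous.prodMk_right v)).clm_apply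
          continuous_const).pow 2).measurable).div
          ((hFcont.comp (Continuous.prodMk_right v)).measurable)
      refine Integrable.mono' hΦv hmq (Filter.Eventually.of_forall fun w => ?_)
      rw [Real.norm_eq_abs, abs_of_nonneg (div_nonneg (sq_nonneg _) (hF0 v w))]
      have h1 : (L (v, w) (Pi.single i 1)) ^ 2 ≤ ∑ j, (L (v, w) (Pi.single j 1)) ^ 2 :=
        Finset.single_le_sum (f := fun j => (L (v, w) (Pi.single j 1)) ^ 2)
          (fun j _ => sq_nonneg _) (Finset.mem_univ i)
      have hΦvw : Φ (v, w) = (∑ j, (L (v, w) (Pi.single j 1)) ^ 2) / F v w := by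
        rw [hΦ]; simp only [hgs_eq v w]
      rw [hΦvw]
      gcongr
      exact hF0 v w
    -- Cauchy–Schwarz per coordinate
    have hCS : ∀ i : Fin 3, (pd (fun v' => ∫ w, F v' w) v i) ^ 2 ≤
        (∫ w, F v w) * ∫ w, (L (v, w) (Pi.single i 1)) ^ 2 / F v w := by
      intro i
      rw [hpdint i]
      refine cs_div (hF0 v) (fun w hw => ?_) hFv (hint_q i) (hint_h i)
      rw [hzero w hw]; simp
    -- sum over coordinates
    have e3 : ∫ w, Φ (v, w) = ∑ i : Fin 3, ∫ w, (L (v, w) (Pi.single i 1)) ^ 2 / F v w := by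
      rw [← integral_finset_sum _ (fun i _ => hint_q i)]
      refine integral_congr_ae (Filter.Eventually.of_forall fun w => ?_)
      rw [hΦ]
      simp only [hgs_eq v w]
      rw [Finset.sum_div]
    have hsum : gradSq (fun v' => ∫ w, F v' w) v ≤ (∫ w, F v w) * ∫ w, Φ (v, w) := by
      rw [gradSq, e3, Finset.mul_sum]
      exact Finset.sum_le_sum fun i _ => hCS i
    -- divide through
    have hm : 0 ≤ ∫ w, F v w := integral_nonneg (hF0 v)
    have hQ : 0 ≤ ∫ w, Φ (v, w) := integral_nonneg fun w => hΦ0 (v, w)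
    rcases eq_or_lt_of_le hm with hm0 | hm0
    · rw [← hm0, div_zero]; exact hQ
    · rw [div_le_iff₀ hm0]
      calc gradSq (fun v' => ∫ w, F v' w) v ≤ (∫ w, F v w) * ∫ w, Φ (v, w) := hsum
        _ = (∫ w, Φ (v, w)) * ∫ w, F v w := mul_comm _ _
  -- assembly
  have hmargint : Integrable (fun v => ∫ w, Φ (v, w)) (volume : Measure E3) := by
    have h := hΦint; rw [hvol] at h; exact h.integral_prod_left
  have h1 : fisher (fun v => ∫ w, F v w) ≤ ∫ v, ∫ w, Φ (v, w) := by
    rw [fisher]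
    refine integral_mono_of_nonneg (Filter.Eventually.of_forall fun v => ?_) hmargint hkey
    exact div_nonneg (Finset.sum_nonneg fun i _ => sq_nonneg _) (integral_nonneg (hF0 v))
  have h2 : ∫ v, ∫ w, Φ (v, w) = ∫ p, Φ p := by
    have h := hΦint; rw [hvol] at h
    rw [hvol]
    have := integral_integral (f := fun v w => Φ (v, w)) h
    simpa using this
  have h3 : ∫ p, Φ p = ∫ p, Ψ p := by
    rw [hvol, ← integral_prod_swap Ψ]
    refine integral_congr_ae (Filter.Eventually.of_forall fun p => ?_)
    show Φ p = Ψ p.swap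
    rw [hΦ, hΨ]
    show gradSq (fun v' => F v' p.2) p.1 / F p.1 p.2
      = gradSq (fun w' => F p.2 w') p.1 / F p.2 p.1
    rw [show (fun w' => F p.2 w') = (fun v' => F v' p.2) from funext fun w' => hsymm p.2 w',
      hsymm p.2 p.1]
  have h4 : ∫ p : E3 × E3,
      (gradSq (fun v' => F v' p.2) p.1 + gradSq (fun w' => F p.1 w') p.2) / F p.1 p.2
      = (∫ p, Φ p) + ∫ p, Ψ p := by
    rw [integral_congr_ae (Filter.Eventually.of_forall hGeq)]
    exact integral_add hΦint hΨint
  rw [h4]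
  linarith [h1, h2, h3]
end
end

section
/- Let d ≥ 1, 1 ≤ p ≤ ∞ with Hölder conjugate p′, let −d/p′ < μ < 0 and m > d/p′ + μ. Then there is a constant C = C(d, μ, p, m) such that for every f ∈ L^p_m(ℝ^d), the convolution satisfies ‖f ∗ |·|^μ‖_{L^∞(ℝ^d)} ≤ C ‖f‖_{L^p_m(ℝ^d)}. -/
open MeasureTheory ENNReal

noncomputable section

section Aux
open Real Set Metric

lemma aux_near (d : ℕ) (hd : 1 ≤ d) {a : ℝ} (ha : 0 < a) (had : a < d) :
    ∫⁻ u : EuclideanSpace ℝ (Fin d), ENNReal.ofReal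
      (if ‖u‖ ≤ 1 then ‖u‖ ^ (-a) else 0) ∂volume < ∞ := by
  classical
  haveI : Nonempty (Fin d) := ⟨⟨0, hd⟩⟩
  set E := EuclideanSpace ℝ (Fin d)
  have hmble : Measurable fun u : E => ‖u‖ ^ (-a) := by fun_prop
  have hind : ∀ u : E, ENNReal.ofReal (if ‖u‖ ≤ 1 then ‖u‖ ^ (-a) else 0)
      = (closedBall (0:E) 1).indicator (fun u => ENNReal.ofReal (‖u‖ ^ (-a))) u := by
    intro u
    rw [Set.indicator_apply, mem_closedBall_zero_iff]
    split <;> simp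
  simp_rw [hind]
  rw [lintegral_indicator measurableSet_closedBall]
  rw [lintegral_eq_lintegral_meas_lt _
    (Filter.Eventually.of_forall fun u => rpow_nonneg (norm_nonneg _) _) hmble.aemeasurable]
  have hsplit : Ioi (0:ℝ) = Ioc (0:ℝ) 1 ∪ Ioi 1 := (Ioc_union_Ioi_eq_Ioi zero_le_one).symm
  rw [hsplit]
  refine lt_of_le_of_lt (lintegral_union_le _ _ _) ?_
  have hB : volume (closedBall (0:E) 1) < ∞ := measure_closedBall_lt_top
  refine ENNReal.add_lt_top.2 ⟨?_, ?_⟩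
  · calc ∫⁻ t in Ioc (0:ℝ) 1, (volume.restrict (closedBall (0:E) 1)) {u | t < ‖u‖ ^ (-a)}
        ≤ ∫⁻ _ in Ioc (0:ℝ) 1, volume (closedBall (0:E) 1) := by
          refine lintegral_mono fun t => ?_
          refine le_trans (measure_mono (subset_univ _)) ?_
          rw [Measure.restrict_apply_univ]
      _ < ∞ := by
          rw [setLIntegral_const]
          exact ENNReal.mul_lt_top hB (by simp [Real.volume_Ioc])
  · have hsub : ∀ t : ℝ, 1 < t → {u : E | t < ‖u‖ ^ (-a)} ⊆ ball (0:E) (t ^ (-1/a)) := by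
      intro t ht u hu
      simp only [mem_setOf_eq] at hu
      have hu0 : 0 < ‖u‖ := by
        rcases eq_or_lt_of_le (norm_nonneg u) with h | h
        · exfalso; rw [← h, Real.zero_rpow (neg_ne_zero.mpr ha.ne')] at hu; linarith
        · exact h
      have : (‖u‖ ^ (-a)) ^ (-1/a) < t ^ (-1/a) :=
        Real.rpow_lt_rpow_of_neg (by linarith) hu (div_neg_of_neg_of_pos (by norm_num) ha)
      rw [← Real.rpow_mul hu0.le, show (-a) * (-1/a) = 1 by field_simp, Real.rpow_one] at this
      rwa [mem_ball_zero_iff]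
    calc ∫⁻ t in Ioi (1:ℝ), (volume.restrict (closedBall (0:E) 1)) {u | t < ‖u‖ ^ (-a)}
        ≤ ∫⁻ t in Ioi (1:ℝ), ENNReal.ofReal (t ^ (-(d:ℝ)/a)) * volume (ball (0:E) 1) := by
          refine setLIntegral_mono' measurableSet_Ioi fun t ht => ?_
          have ht' : (1:ℝ) < t := ht
          refine le_trans (Measure.restrict_apply_le _ _) ?_
          refine le_trans (measure_mono (hsub t ht')) ?_
          rw [Measure.addHaar_ball _ _ (Real.rpow_nonneg (by linarith) _)]
          rw [finrank_euclideanSpace_fin, ← Real.rpow_natCast (t ^ (-1/a)) d,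
            ← Real.rpow_mul (by linarith : (0:ℝ) ≤ t),
            show (-1/a) * (d:ℝ) = -(d:ℝ)/a by ring]
      _ < ∞ := by
          rw [lintegral_mul_const _ (by fun_prop)]
          refine ENNReal.mul_lt_top ?_ measure_ball_lt_top
          have hint : IntegrableOn (fun t : ℝ => t ^ (-(d:ℝ)/a)) (Ioi 1) volume := by
            refine integrableOn_Ioi_rpow_of_lt ?_ one_pos
            rw [div_lt_iff₀ ha]
            linarith
          have h2 := hint.2
          rw [HasFiniteIntegral] at h2
          refine lt_of_le_of_lt (lintegral_mono fun t => ?_) h2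
          rw [← ofReal_norm_eq_enorm]
          exact ENNReal.ofReal_le_ofReal (le_abs_self _)

lemma ofReal_le_nnnorm (x : ℝ) : ENNReal.ofReal x ≤ ‖x‖₊ := by
  rw [← enorm_eq_nnnorm, ← ofReal_norm_eq_enorm]
  exact ENNReal.ofReal_le_ofReal (le_abs_self _)

lemma aux_far (d : ℕ) {b : ℝ} (hb : (d:ℝ) < b) :
    ∫⁻ u : EuclideanSpace ℝ (Fin d), ENNReal.ofReal
      (if 1 ≤ ‖u‖ then ‖u‖ ^ (-b) else 0) ∂volume < ∞ := by
  have hb0 : 0 < b := lt_of_le_of_lt (Nat.cast_nonneg d) hb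
  have hpt : ∀ u : EuclideanSpace ℝ (Fin d),
      (if 1 ≤ ‖u‖ then ‖u‖ ^ (-b) else 0) ≤ 2 ^ b * (1 + ‖u‖) ^ (-b) := by
    intro u
    split
    · rename_i h
      have h1 : (0:ℝ) < (1 + ‖u‖) / 2 := by positivity
      have h2 : (1 + ‖u‖) / 2 ≤ ‖u‖ := by linarith
      refine le_trans (Real.rpow_le_rpow_of_nonpos h1 h2 (by linarith)) ?_
      rw [Real.div_rpow (by positivity) (by norm_num), Real.rpow_neg (by norm_num : (0:ℝ) ≤ 2),
        div_eq_mul_inv, inv_inv, mul_comm]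
    · positivity
  refine lt_of_le_of_lt (lintegral_mono fun u => ENNReal.ofReal_le_ofReal (hpt u)) ?_
  simp_rw [ENNReal.ofReal_mul (by positivity : (0:ℝ) ≤ 2 ^ b)]
  rw [lintegral_const_mul _ (by fun_prop)]
  refine ENNReal.mul_lt_top ofReal_lt_top ?_
  refine finite_integral_one_add_norm ?_
  rwa [finrank_euclideanSpace_fin]

lemma aux_weight (d : ℕ) {s : ℝ} (hs : (d:ℝ) < s) :
    ∫⁻ w : EuclideanSpace ℝ (Fin d), ENNReal.ofReal
      ((1 + ‖w‖ ^ 2) ^ (-s / 2)) ∂volume < ∞ := by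
  have h : Integrable (fun w : EuclideanSpace ℝ (Fin d) => ((1:ℝ) + ‖w‖ ^ 2) ^ (-s / 2)) volume := by
    refine integrable_rpow_neg_one_add_norm_sq ?_
    rwa [finrank_euclideanSpace_fin]
  have h2 := h.2
  rw [HasFiniteIntegral] at h2
  exact lt_of_le_of_lt (lintegral_mono fun w => ofReal_le_nnnorm _) h2

lemma ptwise {a b c x z : ℝ} (ha : 0 < a) (hb : 0 < b) (hc0 : 0 ≤ c) (hca : c ≤ a)
    (hx : 0 ≤ x) (hz : 1 ≤ z) :
    z ^ (-b/2) * x ^ (-a) ≤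
      (if x ≤ 1 then x ^ (-a) else 0) + z ^ (-(a + b - c)/2)
        + (if 1 ≤ x then x ^ (-(a+b)) else 0) := by
  have hz0 : (0:ℝ) < z := by linarith
  have ht2 : (0:ℝ) ≤ z ^ (-(a + b - c)/2) := rpow_nonneg hz0.le _
  have ht1 : (0:ℝ) ≤ if x ≤ 1 then x ^ (-a) else 0 := by
    split
    · exact rpow_nonneg hx _
    · exact le_rfl
  have ht3 : (0:ℝ) ≤ if 1 ≤ x then x ^ (-(a+b)) else 0 := by
    split
    · exact rpow_nonneg hx _
    · exact le_rfl
  by_cases h1 : x ≤ 1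
  · have hle : z ^ (-b/2) * x ^ (-a) ≤ x ^ (-a) := by
      have hz1 : z ^ (-b/2) ≤ 1 :=
        rpow_le_one_of_one_le_of_nonpos hz (by linarith : -b/2 ≤ 0)
      have := mul_le_of_le_one_left (rpow_nonneg hx (-a)) hz1
      linarith
    rw [if_pos h1]
    linarith
  · push_neg at h1
    have hx0 : (0:ℝ) < x := lt_trans one_pos h1
    have hxsq : (0:ℝ) < x ^ 2 := by positivity
    rw [if_neg (not_le.mpr h1)]
    by_cases h2 : z ≤ x ^ 2
    · have hsq : (x ^ 2 : ℝ) ^ (-(a - c)/2) = x ^ (-(a - c)) := by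
        rw [← Real.rpow_natCast x 2, ← Real.rpow_mul hx]
        norm_num
        congr 1
        ring
      have k1 : x ^ (-(a - c)) ≤ z ^ (-(a - c)/2) := by
        rw [← hsq]
        exact Real.rpow_le_rpow_of_nonpos hz0 h2 (by linarith : -(a - c)/2 ≤ 0)
      have k2 : x ^ (-a) ≤ z ^ (-(a - c)/2) := by
        have e : x ^ (-a) = x ^ (-(a - c)) * x ^ (-c) := by
          rw [← Real.rpow_add hx0]; ring_nf
        rw [e]
        have : x ^ (-c) ≤ 1 :=
          rpow_le_one_of_one_le_of_nonpos h1.le (by linarith : -c ≤ 0)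
        calc x ^ (-(a - c)) * x ^ (-c) ≤ x ^ (-(a - c)) * 1 := by
              exact mul_le_mul_of_nonneg_left this (rpow_nonneg hx0.le _)
          _ = x ^ (-(a - c)) := mul_one _
          _ ≤ z ^ (-(a - c)/2) := k1
      have k3 : z ^ (-b/2) * x ^ (-a) ≤ z ^ (-b/2) * z ^ (-(a - c)/2) :=
        mul_le_mul_of_nonneg_left k2 (rpow_nonneg hz0.le _)
      have k4 : z ^ (-b/2) * z ^ (-(a - c)/2) = z ^ (-(a + b - c)/2) := by
        rw [← Real.rpow_add hz0]; ring_nf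
      linarith
    · push_neg at h2
      rw [if_pos h1.le]
      have hsq : (x ^ 2 : ℝ) ^ (-b/2) = x ^ (-b) := by
        rw [← Real.rpow_natCast x 2, ← Real.rpow_mul hx]
        norm_num
        congr 1
        ring
      have k1 : z ^ (-b/2) ≤ x ^ (-b) := by
        rw [← hsq]
        exact Real.rpow_le_rpow_of_nonpos hxsq h2.le (by linarith : -b/2 ≤ 0)
      have k2 : z ^ (-b/2) * x ^ (-a) ≤ x ^ (-b) * x ^ (-a) :=
        mul_le_mul_of_nonneg_right k1 (rpow_nonneg hx _)
      have k3 : x ^ (-b) * x ^ (-a) = x ^ (-(a + b)) := by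
        rw [← Real.rpow_add hx0]; ring_nf
      linarith

lemma kernel_bound (d : ℕ) (hd : 1 ≤ d) {a b : ℝ} (ha0 : 0 < a) (had : a < d) (hb : 0 < b)
    (hab : (d:ℝ) < a + b) :
    ∃ K : ℝ≥0∞, K ≠ ∞ ∧ ∀ v : EuclideanSpace ℝ (Fin d),
      ∫⁻ w, ENNReal.ofReal ((1 + ‖w‖ ^ 2) ^ (-b/2) * ‖v - w‖ ^ (-a)) ∂volume ≤ K := by
  classical
  set E := EuclideanSpace ℝ (Fin d)
  set c := min a (a + b - d) / 2 with hc
  have hmin : 0 < min a (a + b - d) := lt_min ha0 (by linarith)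
  have hc0 : 0 < c := by positivity
  have hca : c ≤ a := by
    have h1 := min_le_left a (a + b - (d:ℝ))
    rw [hc]; linarith
  have hex : (d:ℝ) < a + b - c := by
    have h1 := min_le_right a (a + b - (d:ℝ))
    rw [hc]; linarith
  refine ⟨(∫⁻ u : E, ENNReal.ofReal (if ‖u‖ ≤ 1 then ‖u‖ ^ (-a) else 0) ∂volume)
      + (∫⁻ w : E, ENNReal.ofReal ((1 + ‖w‖ ^ 2) ^ (-(a + b - c) / 2)) ∂volume)
      + (∫⁻ u : E, ENNReal.ofReal (if 1 ≤ ‖u‖ then ‖u‖ ^ (-(a + b)) else 0) ∂volume), ?_, ?_⟩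
  · exact (ENNReal.add_lt_top.2 ⟨ENNReal.add_lt_top.2
      ⟨aux_near d hd ha0 had, aux_weight d hex⟩, aux_far d hab⟩).ne
  · intro v
    have m1 : Measurable fun u : E => ENNReal.ofReal (if ‖u‖ ≤ 1 then ‖u‖ ^ (-a) else 0) := by
      refine ENNReal.measurable_ofReal.comp (Measurable.ite ?_ (by fun_prop) measurable_const)
      exact measurableSet_le (by fun_prop) measurable_const
    have m3 : Measurable fun u : E => ENNReal.ofReal (if 1 ≤ ‖u‖ then ‖u‖ ^ (-(a + b)) else 0) := by
      refine ENNReal.measurable_ofReal.comp (Measurable.ite ?_ (by fun_prop) measurable_const)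
      exact measurableSet_le measurable_const (by fun_prop)
    have m2 : Measurable fun w : E => ENNReal.ofReal ((1 + ‖w‖ ^ 2) ^ (-(a + b - c) / 2)) := by
      fun_prop
    have hsub : Measurable fun w : E => v - w := by fun_prop
    have hpt : ∀ w : E, ENNReal.ofReal ((1 + ‖w‖ ^ 2) ^ (-b/2) * ‖v - w‖ ^ (-a)) ≤
        ENNReal.ofReal (if ‖v - w‖ ≤ 1 then ‖v - w‖ ^ (-a) else 0)
        + ENNReal.ofReal ((1 + ‖w‖ ^ 2) ^ (-(a + b - c) / 2))
        + ENNReal.ofReal (if 1 ≤ ‖v - w‖ then ‖v - w‖ ^ (-(a + b)) else 0) := by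
      intro w
      have hz : (1:ℝ) ≤ 1 + ‖w‖ ^ 2 := by nlinarith [sq_nonneg ‖w‖]
      refine le_trans (ENNReal.ofReal_le_ofReal
        (ptwise ha0 hb hc0.le hca (norm_nonneg _) hz)) ?_
      refine le_trans ENNReal.ofReal_add_le ?_
      exact add_le_add ENNReal.ofReal_add_le le_rfl
    have m1' : Measurable fun w : E =>
        ENNReal.ofReal (if ‖v - w‖ ≤ 1 then ‖v - w‖ ^ (-a) else 0) := m1.comp hsub
    have m3' : Measurable fun w : E =>
        ENNReal.ofReal (if 1 ≤ ‖v - w‖ then ‖v - w‖ ^ (-(a + b)) else 0) := m3.comp hsub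
    refine le_trans (lintegral_mono hpt) ?_
    rw [lintegral_add_right _ m3', lintegral_add_right _ m2]
    have e1 : ∫⁻ w, ENNReal.ofReal (if ‖v - w‖ ≤ 1 then ‖v - w‖ ^ (-a) else 0) ∂volume
        = ∫⁻ u : E, ENNReal.ofReal (if ‖u‖ ≤ 1 then ‖u‖ ^ (-a) else 0) ∂volume :=
      (Measure.measurePreserving_sub_left volume v).lintegral_comp m1
    have e3 : ∫⁻ w, ENNReal.ofReal (if 1 ≤ ‖v - w‖ then ‖v - w‖ ^ (-(a + b)) else 0) ∂volume
        = ∫⁻ u : E, ENNReal.ofReal (if 1 ≤ ‖u‖ then ‖u‖ ^ (-(a + b)) else 0) ∂volume :=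
      (Measure.measurePreserving_sub_left volume v).lintegral_comp m3
    rw [e1, e3]

end Aux

/-- Weighted convolution estimate: for `1 ≤ p ≤ ∞` with conjugate `p'`,
`-d/p' < μ < 0` and `m > d/p' + μ`, the convolution `f ∗ |·|^μ` is bounded by
`C ‖f‖_{L^p_m}`, where `‖f‖_{L^p_m} = ‖⟨v⟩^m f‖_{L^p}`. -/
theorem convolution_Linfty_bound (d : ℕ) (hd : 1 ≤ d)
    (p p' : ℝ≥0∞) (hp : 1 ≤ p) (hpc : 1 / p + 1 / p' = 1)
    (μ m : ℝ)
    (hμ1 : -((d : ℝ) / p'.toReal) < μ) (hμ2 : μ < 0)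
    (hm : (d : ℝ) / p'.toReal + μ < m) :
    ∃ C > 0, ∀ f : EuclideanSpace ℝ (Fin d) → ℝ,
      MemLp (fun v => (1 + ‖v‖ ^ 2) ^ (m / 2) * f v) p volume →
      ∀ v, |∫ w, f w * ‖v - w‖ ^ μ| ≤
        C * (eLpNorm (fun v => (1 + ‖v‖ ^ 2) ^ (m / 2) * f v) p volume).toReal := by
  have hq0 : 0 < p'.toReal := by
    rcases lt_or_ge 0 p'.toReal with h | h
    · exact h
    · exfalso
      have h0 : p'.toReal = 0 := le_antisymm h ENNReal.toReal_nonneg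
      rw [h0] at hμ1
      norm_num at hμ1
      linarith
  set q := p'.toReal with hqdef
  have hp'0 : p' ≠ 0 := by
    intro h; rw [h] at hqdef; simp [hqdef] at hq0
  have hp'top : p' ≠ ∞ := by
    intro h; rw [h] at hqdef; simp [hqdef] at hq0
  set E := EuclideanSpace ℝ (Fin d)
  set a := -(μ * q) with ha_def
  set b := m * q with hb_def
  have ha0 : 0 < a := by
    have := mul_neg_of_neg_of_pos hμ2 hq0
    rw [ha_def]; linarith
  have had : a < d := by
    have h1 : (-(d:ℝ)) / q < μ := by rw [neg_div]; exact hμ1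
    have h2 : (-(d:ℝ)) < μ * q := (div_lt_iff₀ hq0).mp h1
    rw [ha_def]; linarith
  have hm0 : 0 < m := by
    have h1 : (0:ℝ) ≤ (d:ℝ) / q := by positivity
    nlinarith
  have hbpos : 0 < b := mul_pos hm0 hq0
  have hab : (d:ℝ) < a + b := by
    have h1 : (d:ℝ) / q < m - μ := by linarith
    have h2 : (d:ℝ) < (m - μ) * q := (div_lt_iff₀ hq0).mp h1
    rw [ha_def, hb_def]; nlinarith
  obtain ⟨K, hKtop, hK⟩ := kernel_bound d hd ha0 had hbpos hab
  set K2 : ℝ≥0∞ := K ^ (1 / q) with hK2def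
  have hK2top : K2 ≠ ∞ := by
    rw [hK2def]
    exact ENNReal.rpow_ne_top_of_nonneg (by positivity) hKtop
  refine ⟨max K2.toReal 1, lt_of_lt_of_le one_pos (le_max_right _ _), ?_⟩
  intro f hf v
  set F := fun w : E => (1 + ‖w‖ ^ 2) ^ (m / 2) * f w with hFdef
  set G := fun w : E => (1 + ‖w‖ ^ 2) ^ (-m / 2) * ‖v - w‖ ^ μ with hGdef
  have hGm : Measurable G := by rw [hGdef]; fun_prop
  have hFG : ∀ w, f w * ‖v - w‖ ^ μ = F w * G w := by
    intro w
    have h1 : (0:ℝ) < 1 + ‖w‖ ^ 2 := by positivity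
    have h2 : ((1:ℝ) + ‖w‖ ^ 2) ^ (m / 2) * (1 + ‖w‖ ^ 2) ^ (-m / 2) = 1 := by
      rw [← Real.rpow_add h1, show m / 2 + -m / 2 = 0 by ring, Real.rpow_zero]
    rw [hFdef, hGdef]
    calc f w * ‖v - w‖ ^ μ
        = ((1 + ‖w‖ ^ 2) ^ (m / 2) * (1 + ‖w‖ ^ 2) ^ (-m / 2)) * (f w * ‖v - w‖ ^ μ) := by
          rw [h2, one_mul]
      _ = (1 + ‖w‖ ^ 2) ^ (m / 2) * f w * ((1 + ‖w‖ ^ 2) ^ (-m / 2) * ‖v - w‖ ^ μ) := by ring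
  have holder : eLpNorm (fun w => F w * G w) 1 volume
      ≤ eLpNorm F p volume * eLpNorm G p' volume := by
    have hT : ENNReal.HolderTriple p p' 1 := ⟨by simpa [one_div] using hpc⟩
    have h := eLpNorm_le_eLpNorm_mul_eLpNorm'_of_norm (p := p) (q := p') (r := 1) hf.1 hGm.aestronglyMeasurable
      (· * ·) 1 (Filter.Eventually.of_forall fun w => by
        rw [NNReal.coe_one, one_mul]; exact norm_mul_le _ _)
    simpa using h
  have hG : eLpNorm G p' volume ≤ K2 := by
    rw [eLpNorm_eq_lintegral_rpow_enorm_toReal hp'0 hp'top, hK2def]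
    refine ENNReal.rpow_le_rpow ?_ (by positivity)
    have hptw : ∀ w : E, ‖G w‖ₑ ^ q
        = ENNReal.ofReal ((1 + ‖w‖ ^ 2) ^ (-b/2) * ‖v - w‖ ^ (-a)) := by
      intro w
      have h1 : (0:ℝ) < 1 + ‖w‖ ^ 2 := by positivity
      have hG0 : 0 ≤ G w := by
        rw [hGdef]
        exact mul_nonneg (Real.rpow_nonneg h1.le _) (Real.rpow_nonneg (norm_nonneg _) _)
      rw [← ofReal_norm_eq_enorm, Real.norm_eq_abs, abs_of_nonneg hG0,
        ENNReal.ofReal_rpow_of_nonneg hG0 hq0.le]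
      congr 1
      rw [hGdef]
      rw [Real.mul_rpow (Real.rpow_nonneg h1.le _) (Real.rpow_nonneg (norm_nonneg _) _),
        ← Real.rpow_mul h1.le, ← Real.rpow_mul (norm_nonneg _)]
      congr 1
      · congr 1
        rw [hb_def]; ring
      · congr 1
        rw [ha_def]; ring
    rw [lintegral_congr hptw]
    exact hK v
  have hFfin : eLpNorm F p volume ≠ ∞ := hf.2.ne
  have hfin : eLpNorm F p volume * K2 ≠ ∞ := ENNReal.mul_ne_top hFfin hK2top
  have hchain : eLpNorm (fun w => F w * G w) 1 volume ≤ eLpNorm F p volume * K2 :=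
    le_trans holder (mul_le_mul_right hG _)
  have hnorm : |∫ w, f w * ‖v - w‖ ^ μ| ≤ (eLpNorm (fun w => F w * G w) 1 volume).toReal := by
    rw [← Real.norm_eq_abs]
    calc ‖∫ w, f w * ‖v - w‖ ^ μ‖
        ≤ (∫⁻ w, ENNReal.ofReal ‖f w * ‖v - w‖ ^ μ‖ ∂volume).toReal :=
          norm_integral_le_lintegral_norm _
      _ = (eLpNorm (fun w => F w * G w) 1 volume).toReal := by
          rw [eLpNorm_one_eq_lintegral_enorm]
          congr 1
          apply lintegral_congr
          intro w
          rw [← ofReal_norm_eq_enorm, hFG w]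
  refine le_trans hnorm ?_
  refine le_trans (ENNReal.toReal_mono hfin hchain) ?_
  rw [ENNReal.toReal_mul, mul_comm]
  exact mul_le_mul_of_nonneg_right (le_max_left _ _) ENNReal.toReal_nonneg
end
end
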